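/- Let G be a finite connected simple graph with positive real edge weights, and for each pair of vertices fix a minimum-weight path P(x, y) between them. For each vertex z and each edge e = {x, y}, let C(z, e) be the closed walk formed by P(z, x), the edge e, and P(y, z). Then the set of all such C(z, e) that are simple cycles contains a minimum-weight cycle basis of G (Horton's theorem). -/

import Mathlib

open SimpleGraph

variable {V : Type*} [Fintype V] [DecidableEq V]

/-- The edge set of a (simple, unoriented) cycle of a graph `H`, as a finset of edges. -/
def IsCycleEdgeSet (H : SimpleGraph V) (F : Finset (Sym2 V)) : Prop :=
  ∃ (v : V) (c : H.Walk v v), c.IsCycle ∧ F = c.edges.toFinset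

/-- The incidence (indicator) vector of a finite set of edges, over `GF(2)`. -/
def edgeIndicator (F : Finset (Sym2 V)) : Sym2 V → ZMod 2 :=
  fun e => if e ∈ F then 1 else 0

/-- The cycle space of `G` over `GF(2)`: the span of the indicator vectors of
the edge sets of cycles of `G`. -/
def cycleSpace (G : SimpleGraph V) : Submodule (ZMod 2) (Sym2 V → ZMod 2) :=
  Submodule.span (ZMod 2) {f | ∃ F : Finset (Sym2 V), IsCycleEdgeSet G F ∧ f = edgeIndicator F}

/-- A cycle basis of `G`: a finite set of edge sets of cycles of `G` whose indicator vectors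
are linearly independent over `GF(2)` and span the cycle space of `G`. -/
def IsCycleBasis (G : SimpleGraph V) (B : Finset (Finset (Sym2 V))) : Prop :=
  (∀ F ∈ B, IsCycleEdgeSet G F) ∧
  LinearIndependent (ZMod 2) (fun F : B => edgeIndicator (F : Finset (Sym2 V))) ∧
  Submodule.span (ZMod 2) (edgeIndicator '' (B : Set (Finset (Sym2 V)))) = cycleSpace G

/-- The weight of a finite set of cycles (given as edge sets): the sum over the cycles of the
sum of the weights of their edges. -/
def basisWeight (ω : Sym2 V → ℝ) (B : Finset (Finset (Sym2 V))) : ℝ :=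
  ∑ F ∈ B, ∑ e ∈ F, ω e

/-- The weight of a walk: the sum of the weights of its edges. -/
def walkWeight {G : SimpleGraph V} (ω : Sym2 V → ℝ) {u v : V} (p : G.Walk u v) : ℝ :=
  (p.edges.map ω).sum

/-- The closed walk `C(z, e)` of Horton, for `e = {x, y}`: the walk `P z x`, followed by the
edge `e`, followed by the walk `P y z`. -/
def hortonWalk {G : SimpleGraph V} (P : ∀ x y : V, G.Walk x y) (z x y : V)
    (h : G.Adj x y) : G.Walk z z :=
  (P z x).append (SimpleGraph.Walk.cons h (P y z))


set_option linter.unusedSectionVars false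
namespace HortonAux

variable {V : Type*} [Fintype V] [DecidableEq V] {G : SimpleGraph V}

/-- parity vector of a walk over GF(2) -/
def chi {u v : V} (w : G.Walk u v) : Sym2 V → ZMod 2 := fun e => (w.edges.count e : ZMod 2)

lemma addSelf (f : Sym2 V → ZMod 2) : f + f = 0 := by
  funext e
  show f e + f e = 0
  have : ∀ a : ZMod 2, a + a = 0 := by decide
  exact this _

lemma chi_nil {u : V} : chi (SimpleGraph.Walk.nil : G.Walk u u) = 0 := by
  funext e; simp [chi]

lemma chi_eq_zero_of_edges_nil {u v : V} (w : G.Walk u v) (h : w.edges = []) : chi w = 0 := by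
  funext e; simp [chi, h]

def single (e₀ : Sym2 V) : Sym2 V → ZMod 2 := fun e => if e = e₀ then 1 else 0

lemma chi_cons {u v w : V} (h : G.Adj u v) (p : G.Walk v w) :
    chi (SimpleGraph.Walk.cons h p) = single s(u, v) + chi p := by
  funext e
  simp only [chi, SimpleGraph.Walk.edges_cons, List.count_cons, single, Pi.add_apply]
  by_cases he : s(u, v) = e
  · subst he; simp [add_comm]
  · have he2 : ¬ e = s(u, v) := fun h => he h.symm
    simp [he, he2]

lemma chi_append {u v w : V} (p : G.Walk u v) (q : G.Walk v w) :
    chi (p.append q) = chi p + chi q := by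
  funext e
  simp [chi, SimpleGraph.Walk.edges_append, List.count_append]

lemma chi_reverse {u v : V} (p : G.Walk u v) : chi p.reverse = chi p := by
  funext e
  simp [chi, SimpleGraph.Walk.edges_reverse]

lemma chi_trail {u v : V} (p : G.Walk u v) (hp : p.IsTrail) :
    chi p = fun e => if e ∈ p.edges.toFinset then 1 else 0 := by
  funext e
  simp only [chi, List.mem_toFinset]
  by_cases he : e ∈ p.edges
  · simp [List.count_eq_one_of_mem hp.edges_nodup he, he]
  · simp [List.count_eq_zero_of_not_mem he, he]


section Weights

variable (ω : Sym2 V → ℝ)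

lemma ww_nil {u : V} : walkWeight ω (SimpleGraph.Walk.nil : G.Walk u u) = 0 := by
  simp [walkWeight]

lemma ww_cons {u v w : V} (h : G.Adj u v) (p : G.Walk v w) :
    walkWeight ω (SimpleGraph.Walk.cons h p) = ω s(u, v) + walkWeight ω p := by
  simp [walkWeight]

lemma ww_append {u v w : V} (p : G.Walk u v) (q : G.Walk v w) :
    walkWeight ω (p.append q) = walkWeight ω p + walkWeight ω q := by
  simp [walkWeight, SimpleGraph.Walk.edges_append]

lemma ww_reverse {u v : V} (p : G.Walk u v) : walkWeight ω p.reverse = walkWeight ω p := by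
  simp only [walkWeight, SimpleGraph.Walk.edges_reverse, List.map_reverse, List.sum_reverse]

variable (hω : ∀ e ∈ G.edgeSet, 0 < ω e)
include hω

lemma ww_nonneg {u v : V} (p : G.Walk u v) : 0 ≤ walkWeight ω p := by
  apply List.sum_nonneg
  intro x hx
  obtain ⟨e, he, rfl⟩ := List.mem_map.mp hx
  exact le_of_lt (hω e (p.edges_subset_edgeSet he))

lemma ww_pos {u v : V} (p : G.Walk u v) (hp : ¬ p.Nil) : 0 < walkWeight ω p := by
  rw [SimpleGraph.Walk.not_nil_iff] at hp
  obtain ⟨w, h, q, rfl⟩ := hp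
  rw [ww_cons]
  have := hω s(u, w) h
  have := ww_nonneg ω hω q
  linarith

omit hω

lemma sum_toFinset_le (l : List (Sym2 V)) (h : ∀ e ∈ l, 0 ≤ ω e) :
    ∑ e ∈ l.toFinset, ω e ≤ (l.map ω).sum := by
  induction l with
  | nil => simp
  | cons a l ih =>
    have h' : ∀ e ∈ l, 0 ≤ ω e := fun e he => h e (List.mem_cons_of_mem _ he)
    by_cases ha : a ∈ l
    · have : (a :: l).toFinset = l.toFinset := by
        simp [List.toFinset_cons, Finset.insert_eq_self.mpr (List.mem_toFinset.mpr ha)]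
      rw [this, List.map_cons, List.sum_cons]
      have := ih h'
      have := h a List.mem_cons_self
      linarith
    · rw [List.toFinset_cons, Finset.sum_insert (by simpa using ha), List.map_cons, List.sum_cons]
      have := ih h'
      linarith

lemma ww_eq_sum_toFinset {u v : V} (p : G.Walk u v) (hp : p.IsTrail) :
    walkWeight ω p = ∑ e ∈ p.edges.toFinset, ω e := by
  rw [walkWeight, Finset.sum_list_map_count]
  apply Finset.sum_congr rfl
  intro e he
  rw [List.count_eq_one_of_mem hp.edges_nodup (List.mem_toFinset.mp he), one_nsmul]

end Weights

section Structure

lemma path_loop_edges {u : V} (p : G.Walk u u) (hp : p.IsPath) : p.edges = [] := by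
  cases p with
  | nil => simp
  | cons h q =>
    exfalso
    have hs := (SimpleGraph.Walk.isPath_def _).mp hp
    rw [SimpleGraph.Walk.support_cons, List.nodup_cons] at hs
    exact hs.1 q.end_mem_support

lemma chi_loop_path {u : V} (p : G.Walk u u) (hp : p.IsPath) : chi p = 0 :=
  chi_eq_zero_of_edges_nil p (path_loop_edges p hp)

lemma ww_loop_path (ω : Sym2 V → ℝ) {u : V} (p : G.Walk u u) (hp : p.IsPath) :
    walkWeight ω p = 0 := by
  rw [walkWeight, path_loop_edges p hp]; simp

lemma endpoints_edge_not_mem {b z : V} (p : G.Walk b z) (hp : p.IsPath) (hl : 2 ≤ p.length) :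
    s(z, b) ∉ p.edges := by
  intro hmem
  cases p with
  | nil => simp at hl
  | @cons _ c _ h q =>
    rw [SimpleGraph.Walk.edges_cons, List.mem_cons] at hmem
    have hsup := (SimpleGraph.Walk.isPath_def _).mp hp
    rw [SimpleGraph.Walk.support_cons, List.nodup_cons] at hsup
    rcases hmem with hmem | hmem
    · rw [Sym2.eq_iff] at hmem
      rcases hmem with ⟨hzb, hbc⟩ | ⟨hzc, -⟩
      · subst hzb
        have he := path_loop_edges _ hp
        rw [SimpleGraph.Walk.edges_cons] at he
        simp at he
      · subst hzc
        have hq : q.IsPath := hp.of_cons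
        have he := path_loop_edges _ hq
        have h2 : q.length = 0 := by rw [← q.length_edges, he]; rfl
        rw [SimpleGraph.Walk.length_cons] at hl
        omega
    · rw [Sym2.eq_swap] at hmem
      exact hsup.1 (q.fst_mem_support_of_mem_edges hmem)

lemma isCycle_of_tailNodup {z : V} (w : G.Walk z z) (hl : 3 ≤ w.length)
    (hn : w.support.tail.Nodup) : w.IsCycle := by
  cases w with
  | nil => simp at hl
  | cons h q =>
    rw [SimpleGraph.Walk.cons_isCycle_iff]
    have hq : q.IsPath := by
      rw [SimpleGraph.Walk.isPath_def]
      rwa [SimpleGraph.Walk.support_cons, List.tail_cons] at hn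
    refine ⟨hq, endpoints_edge_not_mem q hq ?_⟩
    rw [SimpleGraph.Walk.length_cons] at hl
    omega

end Structure

section Decomp

variable (G) (ω : Sym2 V → ℝ)

/-- indicators of simple cycles of weight strictly below `W` -/
def cycsBelow (W : ℝ) : Set (Sym2 V → ZMod 2) :=
  {f | ∃ (u : V) (c : G.Walk u u), c.IsCycle ∧ walkWeight ω c < W ∧ f = chi c}

variable {G ω}

lemma cycsBelow_mono {W₁ W₂ : ℝ} (h : W₁ ≤ W₂) : cycsBelow G ω W₁ ⊆ cycsBelow G ω W₂ := by
  rintro f ⟨u, c, hc, hw, rfl⟩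
  exact ⟨u, c, hc, lt_of_lt_of_le hw h, rfl⟩

lemma closedwalk_decomp (hω : ∀ e ∈ G.edgeSet, 0 < ω e) :
    ∀ (n : ℕ) (z : V) (w : G.Walk z z), w.length ≤ n → ¬ w.IsCycle →
      chi w ∈ Submodule.span (ZMod 2) (cycsBelow G ω (walkWeight ω w)) := by
  intro n
  induction n with
  | zero =>
    intro z w hlen _
    have he : w.edges = [] := List.length_eq_zero_iff.mp (by rw [SimpleGraph.Walk.length_edges]; omega)
    rw [chi_eq_zero_of_edges_nil w he]; exact Submodule.zero_mem _
  | succ n ih =>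
    intro z w hlen hnc
    by_cases hnodup : w.support.tail.Nodup
    · have hl2 : w.length ≤ 2 := by
        by_contra hgt
        exact hnc (isCycle_of_tailNodup w (by omega) hnodup)
      cases w with
      | nil => rw [chi_nil]; exact Submodule.zero_mem _
      | @cons _ b _ h q =>
        cases q with
        | nil => exact absurd h (G.loopless.irrefl z)
        | @cons _ c _ h' q' =>
          have hq' : q'.length = 0 := by
            have := SimpleGraph.Walk.length_cons h (SimpleGraph.Walk.cons h' q')
            have := SimpleGraph.Walk.length_cons h' q'
            omega
          have hcz : c = z := SimpleGraph.Walk.eq_of_length_eq_zero hq'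
          subst hcz
          have hq'e : q'.edges = [] :=
            List.length_eq_zero_iff.mp (by rw [SimpleGraph.Walk.length_edges]; omega)
          rw [chi_cons, chi_cons, chi_eq_zero_of_edges_nil q' hq'e, add_zero,
            Sym2.eq_swap (a := b) (b := c), addSelf]
          exact Submodule.zero_mem _
    · obtain ⟨b, hdup⟩ := List.exists_duplicate_iff_not_nodup.mpr hnodup
      have hcount : 2 ≤ List.count b w.support.tail := List.duplicate_iff_two_le_count.mp hdup
      have hbsup : b ∈ w.support := by
        rw [w.support_eq_cons]
        exact List.mem_cons_of_mem _ hdup.mem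
      set w2 := w.rotate b hbsup with hw2def
      have hpermE : w2.edges.Perm w.edges := (w.rotate_edges b hbsup).perm
      have hchi : chi w2 = chi w := by
        funext e; simp only [chi]; rw [hpermE.count_eq]
      have hww : walkWeight ω w2 = walkWeight ω w := by
        simp only [walkWeight]; exact ((hpermE.map ω).sum_eq)
      have hlen2 : w2.length = w.length := by
        rw [← SimpleGraph.Walk.length_edges, ← SimpleGraph.Walk.length_edges]
        exact hpermE.length_eq
      have hcount2 : 2 ≤ List.count b w2.support.tail := by
        rwa [((w.support_rotate b hbsup).perm).count_eq]
      have hnotnil : ¬ w2.Nil := by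
        intro hnil
        have h0 : w2.length = 0 := SimpleGraph.Walk.nil_iff_length_eq.mp hnil
        have hsl : w2.support.length = 1 := by rw [SimpleGraph.Walk.length_support, h0]
        have : w2.support.tail.length = 0 := by
          rw [List.length_tail, hsl]
        have : List.count b w2.support.tail ≤ w2.support.tail.length := List.count_le_length
        omega
      rw [← hchi, ← hww]
      obtain ⟨c, hadj, rest, hw2⟩ := SimpleGraph.Walk.not_nil_iff.mp hnotnil
      have hcountrest : 2 ≤ List.count b rest.support := by
        rw [hw2, SimpleGraph.Walk.support_cons, List.tail_cons] at hcount2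
        exact hcount2
      have hbrest : b ∈ rest.support := by
        have := hcountrest
        have : 0 < List.count b rest.support := by omega
        exact List.count_pos_iff.mp this
      set t1 := rest.takeUntil b hbrest with ht1
      set t2 := rest.dropUntil b hbrest with ht2
      have hspec : t1.append t2 = rest := rest.take_spec hbrest
      have hcount_t1 : List.count b t1.support = 1 :=
        rest.count_support_takeUntil_eq_one hbrest
      have hsupp_rest : rest.support = t1.support ++ t2.support.tail := by
        conv_lhs => rw [← hspec]
        exact SimpleGraph.Walk.support_append t1 t2
      have hcount_t2 : 1 ≤ List.count b t2.support.tail := by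
        rw [hsupp_rest, List.count_append] at hcountrest
        omega
      have ht2nn : ¬ t2.Nil := by
        intro hnil
        have h0 : t2.length = 0 := SimpleGraph.Walk.nil_iff_length_eq.mp hnil
        have hsl : t2.support.length = 1 := by rw [SimpleGraph.Walk.length_support, h0]
        have h1 : t2.support.tail.length = 0 := by rw [List.length_tail, hsl]
        have : List.count b t2.support.tail ≤ t2.support.tail.length := List.count_le_length
        omega
      have hchisplit : chi w2 = chi (SimpleGraph.Walk.cons hadj t1) + chi t2 := by
        rw [hw2, chi_cons, chi_cons]
        have : chi rest = chi t1 + chi t2 := by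
          conv_lhs => rw [← hspec]
          exact chi_append t1 t2
        rw [this, add_assoc]
      have hwwsplit : walkWeight ω w2
          = walkWeight ω (SimpleGraph.Walk.cons hadj t1) + walkWeight ω t2 := by
        rw [hw2, ww_cons, ww_cons]
        have : walkWeight ω rest = walkWeight ω t1 + walkWeight ω t2 := by
          conv_lhs => rw [← hspec]
          exact ww_append ω t1 t2
        rw [this, add_assoc]
      have hlensplit : (SimpleGraph.Walk.cons hadj t1).length + t2.length = w2.length := by
        rw [hw2, SimpleGraph.Walk.length_cons, SimpleGraph.Walk.length_cons]
        have : rest.length = t1.length + t2.length := by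
          conv_lhs => rw [← hspec]
          exact SimpleGraph.Walk.length_append t1 t2
        omega
      have hu1len : (SimpleGraph.Walk.cons hadj t1).length = t1.length + 1 :=
        SimpleGraph.Walk.length_cons _ _
      have ht2len : 1 ≤ t2.length := by
        rcases Nat.eq_zero_or_pos t2.length with h0 | h1
        · exact absurd (SimpleGraph.Walk.nil_iff_length_eq.mpr h0) ht2nn
        · omega
      have hu1pos : 0 < walkWeight ω (SimpleGraph.Walk.cons hadj t1) :=
        ww_pos ω hω _ (SimpleGraph.Walk.not_nil_cons)
      have ht2pos : 0 < walkWeight ω t2 := ww_pos ω hω _ ht2nn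
      have key : ∀ (v0 : V) (u : G.Walk v0 v0), u.length ≤ n →
          walkWeight ω u < walkWeight ω w2 →
          chi u ∈ Submodule.span (ZMod 2) (cycsBelow G ω (walkWeight ω w2)) := by
        intro v0 u hul huw
        by_cases hc : u.IsCycle
        · exact Submodule.subset_span ⟨v0, u, hc, huw, rfl⟩
        · exact Submodule.span_mono (cycsBelow_mono (le_of_lt huw)) (ih v0 u hul hc)
      rw [hchisplit]
      refine Submodule.add_mem _ ?_ ?_
      · exact key b _ (by omega) (by linarith [hwwsplit])
      · exact key b _ (by omega) (by linarith [hwwsplit])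

end Decomp

section Main

variable (ω : Sym2 V → ℝ) (P : ∀ x y : V, G.Walk x y)

/-- generators: Horton cycles of weight at most `W` -/
def gen (W : ℝ) : Set (Sym2 V → ZMod 2) :=
  {f | ∃ (z x y : V) (h : G.Adj x y), (hortonWalk P z x y h).IsCycle ∧
    walkWeight ω (hortonWalk P z x y h) ≤ W ∧ f = chi (hortonWalk P z x y h)}

variable {ω P}

lemma gen_mono {W₁ W₂ : ℝ} (h : W₁ ≤ W₂) : gen ω P W₁ ⊆ gen ω P W₂ := by
  rintro f ⟨z, x, y, hxy, hcyc, hw, rfl⟩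
  exact ⟨z, x, y, hxy, hcyc, le_trans hw h, rfl⟩

variable (hω : ∀ e ∈ G.edgeSet, 0 < ω e) (hP : ∀ x y : V, (P x y).IsPath)
  (hPmin : ∀ (x y : V) (q : G.Walk x y), q.IsPath →
    walkWeight ω (P x y) ≤ walkWeight ω q)

include hω hP hPmin

lemma wP_le_walk (x y : V) (q : G.Walk x y) :
    walkWeight ω (P x y) ≤ walkWeight ω q := by
  have h1 := hPmin x y q.bypass q.bypass_isPath
  have h2 : walkWeight ω q.bypass ≤ walkWeight ω q := by
    rw [ww_eq_sum_toFinset ω q.bypass q.bypass_isPath.isTrail]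
    calc ∑ e ∈ q.bypass.edges.toFinset, ω e
        ≤ ∑ e ∈ q.edges.toFinset, ω e := by
          apply Finset.sum_le_sum_of_subset_of_nonneg
          · intro e he
            rw [List.mem_toFinset] at he ⊢
            exact q.edges_bypass_subset he
          · intro e he _
            exact le_of_lt (hω e (q.edges_subset_edgeSet (List.mem_toFinset.mp he)))
      _ ≤ (q.edges.map ω).sum := sum_toFinset_le ω _
          (fun e he => le_of_lt (hω e (q.edges_subset_edgeSet he)))
  linarith

lemma wP_symm (x y : V) : walkWeight ω (P x y) = walkWeight ω (P y x) := by
  have h1 := wP_le_walk hω hP hPmin x y (P y x).reverse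
  have h2 := wP_le_walk hω hP hPmin y x (P x y).reverse
  rw [ww_reverse] at h1 h2
  linarith

lemma main_step (z : V) (c : G.Walk z z) (hc : c.IsCycle)
    (IH : ∀ (u' : V) (c' : G.Walk u' u'), c'.IsCycle →
      walkWeight ω c' < walkWeight ω c →
      chi c' ∈ Submodule.span (ZMod 2) (gen ω P (walkWeight ω c'))) :
    chi c ∈ Submodule.span (ZMod 2) (gen ω P (walkWeight ω c)) := by
  set W := walkWeight ω c with hWdef
  have spanSmall : Submodule.span (ZMod 2) (cycsBelow G ω W)
      ≤ Submodule.span (ZMod 2) (gen ω P W) := by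
    rw [Submodule.span_le]
    rintro f ⟨u', c', hc', hw', rfl⟩
    exact Submodule.span_mono (gen_mono (le_of_lt hw')) (IH u' c' hc' hw')
  have HW2 : ∀ (z' : V) (R : G.Walk z' z'), walkWeight ω R < W →
      chi R ∈ Submodule.span (ZMod 2) (gen ω P W) := by
    intro z' R hR
    by_cases hcy : R.IsCycle
    · exact Submodule.span_mono (gen_mono (le_of_lt hR)) (IH z' R hcy hR)
    · exact spanSmall (Submodule.span_mono (cycsBelow_mono (le_of_lt hR))
        (closedwalk_decomp hω R.length z' R le_rfl hcy))
  have HW1 : ∀ (z' x y : V) (h : G.Adj x y),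
      walkWeight ω (hortonWalk P z' x y h) ≤ W →
      chi (hortonWalk P z' x y h) ∈ Submodule.span (ZMod 2) (gen ω P W) := by
    intro z' x y h hle
    by_cases hcy : (hortonWalk P z' x y h).IsCycle
    · exact Submodule.subset_span ⟨z', x, y, h, hcy, hle, rfl⟩
    · exact spanSmall (Submodule.span_mono (cycsBelow_mono hle)
        (closedwalk_decomp hω _ z' _ le_rfl hcy))
  have stepA : ∀ u' : V, walkWeight ω (P z u') + walkWeight ω (P u' z) ≤ W →
      chi (P z u') + chi (P u' z) ∈ Submodule.span (ZMod 2) (gen ω P W) := by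
    intro u' hB
    by_cases hzu : u' = z
    · subst hzu
      rw [chi_loop_path _ (hP u' u'), add_zero]
      exact Submodule.zero_mem _
    · have hrnn : ¬ (P z u').reverse.Nil := SimpleGraph.Walk.not_nil_of_ne hzu
      obtain ⟨w', h', r'', hr⟩ := SimpleGraph.Walk.not_nil_iff.mp hrnn
      have hrpath : (P z u').reverse.IsPath := (hP z u').reverse
      have hr''path : r''.IsPath := by rw [hr] at hrpath; exact hrpath.of_cons
      have hchiPzu : chi (P z u') = single s(u', w') + chi r'' := by
        rw [← chi_reverse, hr, chi_cons]
      have hwwr : ω s(u', w') + walkWeight ω r'' = walkWeight ω (P z u') := by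
        rw [← ww_reverse ω (P z u'), hr, ww_cons]
      have hchiT : chi (hortonWalk P z w' u' h'.symm)
          = chi (P z w') + (single s(w', u') + chi (P u' z)) := by
        rw [hortonWalk, chi_append, chi_cons]
      have hwwT : walkWeight ω (hortonWalk P z w' u' h'.symm)
          = walkWeight ω (P z w') + (ω s(w', u') + walkWeight ω (P u' z)) := by
        rw [hortonWalk, ww_append, ww_cons]
      have hchiR : chi ((P z w').append r'') = chi (P z w') + chi r'' := by
        rw [chi_append]
      have hwwR : walkWeight ω ((P z w').append r'')
          = walkWeight ω (P z w') + walkWeight ω r'' := by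
        rw [ww_append]
      have hPzw' : walkWeight ω (P z w') ≤ walkWeight ω r'' := by
        have := wP_le_walk hω hP hPmin z w' r''.reverse
        rwa [ww_reverse] at this
      have hepos : 0 < ω s(u', w') := hω _ ((SimpleGraph.mem_edgeSet G).mpr h')
      have hswap : s(w', u') = s(u', w') := Sym2.eq_swap
      have hsymm : walkWeight ω (P z u') = walkWeight ω (P u' z) :=
        wP_symm hω hP hPmin z u'
      have hTmem := HW1 z w' u' h'.symm (by rw [hwwT, hswap]; linarith)
      have hRmem := HW2 z ((P z w').append r'') (by rw [hwwR]; linarith)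
      have key : chi (hortonWalk P z w' u' h'.symm) + chi ((P z w').append r'')
          = chi (P z u') + chi (P u' z) := by
        rw [hchiT, hchiR, hchiPzu, hswap]
        have heq : chi (P z w') + (single s(u', w') + chi (P u' z))
              + (chi (P z w') + chi r'')
            = (single s(u', w') + chi r'' + chi (P u' z))
              + (chi (P z w') + chi (P z w')) := by abel
        rw [heq, addSelf, add_zero]
      rw [← key]
      exact Submodule.add_mem _ hTmem hRmem
  have lemmaM : ∀ (a b : V) (q : G.Walk a b),
      walkWeight ω (P z a) + walkWeight ω q + walkWeight ω (P b z) ≤ W →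
      chi (P z a) + chi q + chi (P b z) ∈ Submodule.span (ZMod 2) (gen ω P W) := by
    intro a b q
    induction q with
    | nil =>
      intro hb
      rw [ww_nil] at hb
      rw [chi_nil, add_zero]
      exact stepA _ (by linarith)
    | @cons a' c' b' h q' ihq =>
      intro hb
      rw [ww_cons] at hb
      have hPzc_le : walkWeight ω (P z c') ≤ walkWeight ω (P z a') + ω s(a', c') := by
        have := wP_le_walk hω hP hPmin z c'
          ((P z a').append (SimpleGraph.Walk.cons h SimpleGraph.Walk.nil))
        rw [ww_append, ww_cons, ww_nil, add_zero] at this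
        exact this
      have hPcz_le : walkWeight ω (P c' z) ≤ walkWeight ω q' + walkWeight ω (P b' z) := by
        have := wP_le_walk hω hP hPmin c' z (q'.append (P b' z))
        rw [ww_append] at this
        exact this
      have hT := HW1 z a' c' h (by rw [hortonWalk, ww_append, ww_cons]; linarith)
      have hI := ihq (by linarith)
      have hA := stepA c' (by linarith)
      have key : chi (hortonWalk P z a' c' h) + (chi (P z c') + chi q' + chi (P b' z))
            + (chi (P z c') + chi (P c' z))
          = chi (P z a') + chi (SimpleGraph.Walk.cons h q') + chi (P b' z) := by
        rw [hortonWalk, chi_append, chi_cons, chi_cons]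
        have heq : chi (P z a') + (single s(a', c') + chi (P c' z))
              + (chi (P z c') + chi q' + chi (P b' z)) + (chi (P z c') + chi (P c' z))
            = (chi (P z a') + (single s(a', c') + chi q') + chi (P b' z))
              + ((chi (P z c') + chi (P z c')) + (chi (P c' z) + chi (P c' z))) := by abel
        rw [heq, addSelf, addSelf, add_zero, add_zero]
      rw [← key]
      exact Submodule.add_mem _ (Submodule.add_mem _ hT hI) hA
  have hPzz := chi_loop_path (P z z) (hP z z)
  have hPzzw := ww_loop_path ω (P z z) (hP z z)
  have := lemmaM z z c (by rw [hPzzw]; simp; exact le_rfl)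
  rwa [hPzz, zero_add, add_zero] at this

omit hω hP hPmin in
lemma cycle_ww_mem_Ws {u : V} (c : G.Walk u u) (hc : c.IsTrail) :
    walkWeight ω c ∈ (Finset.univ : Finset (Finset (Sym2 V))).image
      (fun s => ∑ e ∈ s, ω e) := by
  rw [ww_eq_sum_toFinset ω c hc]
  exact Finset.mem_image.mpr ⟨c.edges.toFinset, Finset.mem_univ _, rfl⟩

lemma main_all : ∀ (n : ℕ) (u : V) (c : G.Walk u u), c.IsCycle →
    (((Finset.univ : Finset (Finset (Sym2 V))).image (fun s => ∑ e ∈ s, ω e)).filter (fun r => r < walkWeight ω c)).card ≤ n →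
    chi c ∈ Submodule.span (ZMod 2) (gen ω P (walkWeight ω c)) := by
  intro n
  induction n with
  | zero =>
    intro u c hc hcard
    apply main_step hω hP hPmin u c hc
    intro u' c' hc' hlt
    exfalso
    have hmem : walkWeight ω c' ∈ ((Finset.univ : Finset (Finset (Sym2 V))).image (fun s => ∑ e ∈ s, ω e)).filter (fun r => r < walkWeight ω c) :=
      Finset.mem_filter.mpr ⟨cycle_ww_mem_Ws c' hc'.isCircuit.isTrail , hlt⟩
    have := Finset.card_pos.mpr ⟨_, hmem⟩
    omega
  | succ n ih =>
    intro u c hc hcard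
    apply main_step hω hP hPmin u c hc
    intro u' c' hc' hlt
    apply ih u' c' hc'
    have hsub : ((Finset.univ : Finset (Finset (Sym2 V))).image (fun s => ∑ e ∈ s, ω e)).filter (fun r => r < walkWeight ω c')
        ⊆ ((Finset.univ : Finset (Finset (Sym2 V))).image (fun s => ∑ e ∈ s, ω e)).filter (fun r => r < walkWeight ω c) :=
      Finset.monotone_filter_right _ (fun r _ hr => lt_trans hr hlt)
    have hmem : walkWeight ω c' ∈ ((Finset.univ : Finset (Finset (Sym2 V))).image (fun s => ∑ e ∈ s, ω e)).filter (fun r => r < walkWeight ω c) :=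
      Finset.mem_filter.mpr ⟨cycle_ww_mem_Ws c' hc'.isCircuit.isTrail , hlt⟩
    have hnot : walkWeight ω c' ∉ ((Finset.univ : Finset (Finset (Sym2 V))).image (fun s => ∑ e ∈ s, ω e)).filter (fun r => r < walkWeight ω c') :=
      fun hm => absurd (Finset.mem_filter.mp hm).2 (lt_irrefl _)
    have := Finset.card_lt_card ((Finset.ssubset_iff_of_subset hsub).mpr ⟨_, hmem, hnot⟩)
    omega

lemma main_final (u : V) (c : G.Walk u u) (hc : c.IsCycle) :
    chi c ∈ Submodule.span (ZMod 2) (gen ω P (walkWeight ω c)) :=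
  main_all hω hP hPmin _ u c hc le_rfl

end Main

section Assemble

variable (P : ∀ x y : V, G.Walk x y)

def hortonProp (F : Finset (Sym2 V)) : Prop :=
  ∃ (z x y : V) (h : G.Adj x y),
    (hortonWalk P z x y h).IsCycle ∧ F = (hortonWalk P z x y h).edges.toFinset

variable {P}

lemma edgeIndicator_injective : Function.Injective (edgeIndicator (V := V)) := by
  intro F F' h
  ext e
  have := congrFun h e
  simp only [edgeIndicator] at this
  constructor
  · intro heF
    by_contra he'
    rw [if_pos heF, if_neg he'] at this
    exact one_ne_zero this
  · intro he'
    by_contra heF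
    rw [if_neg heF, if_pos he'] at this
    exact one_ne_zero this.symm

lemma chi_eq_edgeIndicator {u v : V} (p : G.Walk u v) (hp : p.IsTrail) :
    chi p = edgeIndicator p.edges.toFinset := by
  rw [chi_trail p hp]; rfl

end Assemble

end HortonAux


/-- **Horton's theorem.** Let `G` be a finite connected simple graph with
positive real edge weights, and for each pair of vertices fix a minimum-weight path `P x y`
between them.  For each vertex `z` and each edge `e = {x, y}`, let `C(z, e)` be the closed
walk formed by `P z x`, the edge `e`, and `P y z`.  Then the set of all such `C(z, e)` that
are simple cycles contains a minimum-weight cycle basis of `G`. -/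
theorem horton_contains_minWeight_cycleBasis
    (G : SimpleGraph V) (hG : G.Connected) (ω : Sym2 V → ℝ)
    (hω : ∀ e ∈ G.edgeSet, 0 < ω e)
    (P : ∀ x y : V, G.Walk x y) (hP : ∀ x y : V, (P x y).IsPath)
    (hPmin : ∀ (x y : V) (q : G.Walk x y), q.IsPath →
      walkWeight ω (P x y) ≤ walkWeight ω q) :
    ∃ B : Finset (Finset (Sym2 V)),
      (∀ F ∈ B, ∃ (z x y : V) (h : G.Adj x y),
        (hortonWalk P z x y h).IsCycle ∧ F = (hortonWalk P z x y h).edges.toFinset) ∧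
      IsCycleBasis G B ∧
      ∀ B' : Finset (Finset (Sym2 V)), IsCycleBasis G B' →
        basisWeight ω B ≤ basisWeight ω B' := by
  classical
  open HortonAux in
  -- basic membership facts
  have hcycmem : ∀ F : Finset (Sym2 V), IsCycleEdgeSet G F →
      edgeIndicator F ∈ cycleSpace G :=
    fun F hF => Submodule.subset_span ⟨F, hF, rfl⟩
  have hhortcyc : ∀ F, hortonProp (G := G) P F → IsCycleEdgeSet G F := by
    rintro F ⟨z, x, y, h, hcyc, rfl⟩
    exact ⟨z, _, hcyc, rfl⟩
  have hgen : ∀ (W : ℝ) (f : Sym2 V → ZMod 2), f ∈ HortonAux.gen ω P W →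
      ∃ F₀ : Finset (Sym2 V), hortonProp (G := G) P F₀ ∧ (∑ e ∈ F₀, ω e) ≤ W ∧
        f = edgeIndicator F₀ := by
    rintro W f ⟨z, x, y, h, hcyc, hle, rfl⟩
    refine ⟨(hortonWalk P z x y h).edges.toFinset, ⟨z, x, y, h, hcyc, rfl⟩, ?_, ?_⟩
    · rw [← HortonAux.ww_eq_sum_toFinset ω _ hcyc.isCircuit.isTrail]
      exact hle
    · exact HortonAux.chi_eq_edgeIndicator _ hcyc.isCircuit.isTrail
  -- the main span lemma, stated for edge sets
  have hmain : ∀ F : Finset (Sym2 V), IsCycleEdgeSet G F →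
      edgeIndicator F ∈ Submodule.span (ZMod 2)
        {f | ∃ F₀, hortonProp (G := G) P F₀ ∧ (∑ e ∈ F₀, ω e) ≤ (∑ e ∈ F, ω e) ∧
          f = edgeIndicator F₀} := by
    rintro F ⟨u, c, hcyc, rfl⟩
    have h1 := HortonAux.main_final hω hP hPmin u c hcyc
    have hwF : walkWeight ω c = ∑ e ∈ c.edges.toFinset, ω e :=
      HortonAux.ww_eq_sum_toFinset ω c hcyc.isCircuit.isTrail
    have h2 : HortonAux.gen ω P (walkWeight ω c) ⊆
        {f | ∃ F₀, hortonProp (G := G) P F₀ ∧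
          (∑ e ∈ F₀, ω e) ≤ (∑ e ∈ c.edges.toFinset, ω e) ∧ f = edgeIndicator F₀} := by
      intro f hf
      obtain ⟨F₀, h₀, hle, rfl⟩ := hgen _ f hf
      exact ⟨F₀, h₀, by rw [← hwF]; exact hle, rfl⟩
    rw [← HortonAux.chi_eq_edgeIndicator c hcyc.isCircuit.isTrail]
    exact Submodule.span_mono h2 h1
  -- the spanning set of horton indicators
  set t : Set (Sym2 V → ZMod 2) :=
    edgeIndicator '' {F | hortonProp (G := G) P F} with htdef
  have hspan_t : Submodule.span (ZMod 2) t = cycleSpace G := by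
    apply le_antisymm
    · rw [Submodule.span_le]
      rintro f ⟨F, hF, rfl⟩
      exact hcycmem F (hhortcyc F hF)
    · rw [cycleSpace, Submodule.span_le]
      rintro f ⟨F, hF, rfl⟩
      refine Submodule.span_mono ?_ (hmain F hF)
      rintro g ⟨F₀, h₀, -, rfl⟩
      exact ⟨F₀, h₀, rfl⟩
  -- extract a basis from the horton set
  obtain ⟨b, hbt, hbspan, hbind⟩ := exists_linearIndependent (ZMod 2) t
  set B0 : Finset (Finset (Sym2 V)) :=
    Finset.univ.filter (fun F => hortonProp (G := G) P F ∧ edgeIndicator F ∈ b) with hB0def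
  have himg0 : edgeIndicator '' (B0 : Set (Finset (Sym2 V))) = b := by
    apply Set.eq_of_subset_of_subset
    · rintro f ⟨F, hF, rfl⟩
      rw [Finset.mem_coe, hB0def, Finset.mem_filter] at hF
      exact hF.2.2
    · intro f hf
      obtain ⟨F, hFh, rfl⟩ := hbt hf
      refine ⟨F, ?_, rfl⟩
      rw [Finset.mem_coe, hB0def, Finset.mem_filter]
      exact ⟨Finset.mem_univ _, hFh, hf⟩
  -- family/set independence transfer
  have hInjOn : ∀ s : Set (Finset (Sym2 V)), Set.InjOn edgeIndicator s :=
    fun s => Function.Injective.injOn HortonAux.edgeIndicator_injective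
  have hB0basis : IsCycleBasis G B0 := by
    refine ⟨?_, ?_, ?_⟩
    · intro F hF
      rw [hB0def, Finset.mem_filter] at hF
      exact hhortcyc F hF.2.1
    · have := (linearIndepOn_iff_image (f := edgeIndicator)
        (s := (B0 : Set (Finset (Sym2 V)))) (hInjOn _)).mpr (by rw [himg0]; exact hbind)
      exact this
    · rw [himg0, hbspan, hspan_t]
  -- candidates and minimization
  set Cand : Finset (Finset (Finset (Sym2 V))) :=
    Finset.univ.filter (fun B => IsCycleBasis G B) with hCanddef
  have hB0mem : B0 ∈ Cand := by
    rw [hCanddef, Finset.mem_filter]; exact ⟨Finset.mem_univ _, hB0basis⟩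
  obtain ⟨Bm, hBmmem, hBmmin⟩ := Finset.exists_min_image Cand (basisWeight ω) ⟨B0, hB0mem⟩
  set Cand2 : Finset (Finset (Finset (Sym2 V))) :=
    Cand.filter (fun B => basisWeight ω B ≤ basisWeight ω Bm) with hCand2def
  have hBmmem2 : Bm ∈ Cand2 := by
    rw [hCand2def, Finset.mem_filter]; exact ⟨hBmmem, le_refl _⟩
  obtain ⟨B, hBmem2, hBcnt⟩ := Finset.exists_min_image Cand2
    (fun B => (B.filter (fun F => ¬ hortonProp (G := G) P F)).card) ⟨Bm, hBmmem2⟩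
  rw [hCand2def, Finset.mem_filter] at hBmem2
  obtain ⟨hBmemC, hBw⟩ := hBmem2
  rw [hCanddef, Finset.mem_filter] at hBmemC
  have hBc : IsCycleBasis G B := hBmemC.2
  -- every member of B is a horton cycle
  have hall : ∀ F ∈ B, hortonProp (G := G) P F := by
    by_contra hnot
    push_neg at hnot
    obtain ⟨F, hFB, hFnh⟩ := hnot
    obtain ⟨hBcyc, hBind, hBspan⟩ := hBc
    obtain ⟨u, c, hcyc, hFeq⟩ := hBcyc F hFB
    -- not in the span of the others
    have hnotspan : edgeIndicator F ∉ Submodule.span (ZMod 2)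
        (edgeIndicator '' ((B : Set (Finset (Sym2 V))) \ {F})) := by
      have h1 := hBind.notMem_span_image
        (s := {y : {x // x ∈ B} | (y : Finset (Sym2 V)) ≠ F}) (x := ⟨F, hFB⟩)
        (by simp)
      have h2 : (fun (F' : {x // x ∈ B}) => edgeIndicator (F' : Finset (Sym2 V))) ''
          {y : {x // x ∈ B} | (y : Finset (Sym2 V)) ≠ F}
          = edgeIndicator '' ((B : Set (Finset (Sym2 V))) \ {F}) := by
        ext f
        constructor
        · rintro ⟨y, hy, rfl⟩
          exact ⟨y, ⟨y.2, hy⟩, rfl⟩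
        · rintro ⟨F', ⟨hF'B, hF'ne⟩, rfl⟩
          exact ⟨⟨F', hF'B⟩, hF'ne, rfl⟩
      rwa [h2] at h1
    -- find a horton replacement
    have hex : ∃ F₀, hortonProp (G := G) P F₀ ∧ (∑ e ∈ F₀, ω e) ≤ (∑ e ∈ F, ω e) ∧
        edgeIndicator F₀ ∉ Submodule.span (ZMod 2)
          (edgeIndicator '' ((B : Set (Finset (Sym2 V))) \ {F})) := by
      by_contra hno
      push_neg at hno
      apply hnotspan
      have hm := hmain F ⟨u, c, hcyc, hFeq⟩
      refine Submodule.span_le.mpr ?_ hm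
      rintro f ⟨F₀, h₀, hle, rfl⟩
      exact hno F₀ h₀ hle
    obtain ⟨F₀, hF₀h, hF₀w, hF₀ns⟩ := hex
    have hF₀ne : F₀ ≠ F := fun h => hFnh (h ▸ hF₀h)
    have hF₀nmem : F₀ ∉ B.erase F := by
      intro hmem
      apply hF₀ns
      apply Submodule.subset_span
      refine ⟨F₀, ?_, rfl⟩
      rw [← Finset.coe_erase]
      exact hmem
    set B2 : Finset (Finset (Sym2 V)) := insert F₀ (B.erase F) with hB2def
    -- independence of B2
    have hindErase : LinearIndependent (ZMod 2)
        (fun F' : {x // x ∈ B.erase F} => edgeIndicator (F' : Finset (Sym2 V))) := by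
      refine hBind.comp
        (fun y : {x // x ∈ B.erase F} => (⟨y, Finset.mem_of_mem_erase y.2⟩ : {x // x ∈ B})) ?_
      intro a b hab
      rw [Subtype.mk.injEq] at hab
      exact Subtype.ext hab
    have hindSetErase : LinearIndependent (ZMod 2)
        ((↑) : (edgeIndicator '' ((B.erase F : Finset (Finset (Sym2 V))) :
          Set (Finset (Sym2 V)))) → (Sym2 V → ZMod 2)) :=
      (linearIndepOn_iff_image (hInjOn _)).mp hindErase
    have hF₀nsp : edgeIndicator F₀ ∉ Submodule.span (ZMod 2)
        (edgeIndicator '' ((B.erase F : Finset (Finset (Sym2 V))) : Set (Finset (Sym2 V)))) := by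
      rw [Finset.coe_erase]
      exact hF₀ns
    have hindInsert := LinearIndepOn.id_insert hindSetErase hF₀nsp
    have hB2img : edgeIndicator '' (B2 : Set (Finset (Sym2 V)))
        = insert (edgeIndicator F₀)
          (edgeIndicator '' ((B.erase F : Finset (Finset (Sym2 V))) : Set (Finset (Sym2 V)))) := by
      rw [hB2def, Finset.coe_insert, Set.image_insert_eq]
    have hB2ind : LinearIndependent (ZMod 2)
        (fun F' : {x // x ∈ B2} => edgeIndicator (F' : Finset (Sym2 V))) := by
      refine (linearIndepOn_iff_image (hInjOn _)).mpr ?_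
      show LinearIndependent (ZMod 2) ((↑) : (edgeIndicator '' (B2 : Set (Finset (Sym2 V)))) → (Sym2 V → ZMod 2))
      rw [hB2img]
      exact hindInsert
    -- cycle property of B2
    have hB2cyc : ∀ F' ∈ B2, IsCycleEdgeSet G F' := by
      intro F' hF'
      rw [hB2def, Finset.mem_insert] at hF'
      rcases hF' with rfl | hF'
      · exact hhortcyc F' hF₀h
      · exact hBcyc F' (Finset.mem_of_mem_erase hF')
    -- span of B2
    have hB2span : Submodule.span (ZMod 2)
        (edgeIndicator '' (B2 : Set (Finset (Sym2 V)))) = cycleSpace G := by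
      apply le_antisymm
      · rw [Submodule.span_le]
        rintro f ⟨F', hF', rfl⟩
        exact hcycmem F' (hB2cyc F' hF')
      · rw [← hBspan, Submodule.span_le]
        rintro f ⟨F', hF'B, rfl⟩
        by_cases hFF : F' = F
        · subst hFF
          -- express edgeIndicator F' via F₀ and the others
          have hF₀cs : edgeIndicator F₀ ∈ cycleSpace G := hcycmem F₀ (hhortcyc F₀ hF₀h)
          rw [← hBspan] at hF₀cs
          have : edgeIndicator '' (B : Set (Finset (Sym2 V)))
              = ((B.image edgeIndicator : Finset (Sym2 V → ZMod 2)) :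
                  Set (Sym2 V → ZMod 2)) := by
            rw [Finset.coe_image]
          rw [this] at hF₀cs
          obtain ⟨ν, -, hν⟩ := Submodule.mem_span_finset.mp hF₀cs
          have hFim : edgeIndicator F' ∈ B.image edgeIndicator :=
            Finset.mem_image_of_mem _ hF'B
          have hsplit : ν (edgeIndicator F') • edgeIndicator F'
              + ∑ v ∈ (B.image edgeIndicator).erase (edgeIndicator F'), ν v • v
              = edgeIndicator F₀ := by
            rw [Finset.add_sum_erase _ (fun v => ν v • v) hFim]
            exact hν
          have herase_im : (B.image edgeIndicator).erase (edgeIndicator F')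
              = (B.erase F').image edgeIndicator := by
            rw [← Finset.image_erase HortonAux.edgeIndicator_injective]
          have hsum_mem : ∑ v ∈ (B.erase F').image edgeIndicator, ν v • v
              ∈ Submodule.span (ZMod 2) (edgeIndicator '' (B2 : Set (Finset (Sym2 V)))) := by
            apply Submodule.sum_mem
            intro v hv
            obtain ⟨F'', hF''mem, rfl⟩ := Finset.mem_image.mp hv
            apply Submodule.smul_mem
            apply Submodule.subset_span
            refine ⟨F'', ?_, rfl⟩
            rw [hB2def, Finset.coe_insert]
            exact Set.mem_insert_of_mem _ hF''mem
          have hsum_memS : ∑ v ∈ (B.erase F').image edgeIndicator, ν v • v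
              ∈ Submodule.span (ZMod 2)
                (edgeIndicator '' ((B : Set (Finset (Sym2 V))) \ {F'})) := by
            apply Submodule.sum_mem
            intro v hv
            obtain ⟨F'', hF''mem, rfl⟩ := Finset.mem_image.mp hv
            apply Submodule.smul_mem
            apply Submodule.subset_span
            refine ⟨F'', ?_, rfl⟩
            rw [← Finset.coe_erase]
            exact hF''mem
          have hc1 : ν (edgeIndicator F') = 1 := by
            rcases (by decide : ∀ a : ZMod 2, a = 0 ∨ a = 1) (ν (edgeIndicator F')) with h0 | h1
            · exfalso
              apply hF₀ns
              rw [← hsplit, h0, zero_smul, zero_add, herase_im]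
              exact hsum_memS
            · exact h1
          rw [hc1, one_smul, herase_im] at hsplit
          have : edgeIndicator F' = edgeIndicator F₀
              - ∑ v ∈ (B.erase F').image edgeIndicator, ν v • v := by
            rw [← hsplit]; ring
          rw [this]
          apply Submodule.sub_mem
          · apply Submodule.subset_span
            refine ⟨F₀, ?_, rfl⟩
            rw [hB2def, Finset.coe_insert]
            exact Set.mem_insert _ _
          · exact hsum_mem
        · apply Submodule.subset_span
          refine ⟨F', ?_, rfl⟩
          rw [hB2def, Finset.coe_insert]
          exact Set.mem_insert_of_mem _ (Finset.mem_coe.mpr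
            (Finset.mem_erase.mpr ⟨hFF, hF'B⟩))
    have hB2basis : IsCycleBasis G B2 := ⟨hB2cyc, hB2ind, hB2span⟩
    -- weight comparison
    have hbw2 : basisWeight ω B2 ≤ basisWeight ω B := by
      rw [basisWeight, basisWeight, hB2def, Finset.sum_insert hF₀nmem,
        Finset.sum_erase_eq_sub hFB]
      linarith
    have hB2memC : B2 ∈ Cand := by
      rw [hCanddef, Finset.mem_filter]; exact ⟨Finset.mem_univ _, hB2basis⟩
    have hB2mem2 : B2 ∈ Cand2 := by
      rw [hCand2def, Finset.mem_filter]
      exact ⟨hB2memC, le_trans hbw2 hBw⟩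
    -- count strictly decreases
    have hfilt : B2.filter (fun F' => ¬ hortonProp (G := G) P F')
        = (B.filter (fun F' => ¬ hortonProp (G := G) P F')).erase F := by
      ext F'
      rw [Finset.mem_filter, hB2def, Finset.mem_insert, Finset.mem_erase,
        Finset.mem_erase, Finset.mem_filter]
      constructor
      · rintro ⟨rfl | ⟨hne, hmem⟩, hnh⟩
        · exact absurd hF₀h hnh
        · exact ⟨hne, hmem, hnh⟩
      · rintro ⟨hne, hmem, hnh⟩
        exact ⟨Or.inr ⟨hne, hmem⟩, hnh⟩
    have hFfilt : F ∈ B.filter (fun F' => ¬ hortonProp (G := G) P F') :=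
      Finset.mem_filter.mpr ⟨hFB, hFnh⟩
    have hlt : (B2.filter (fun F' => ¬ hortonProp (G := G) P F')).card
        < (B.filter (fun F' => ¬ hortonProp (G := G) P F')).card := by
      rw [hfilt]
      exact Finset.card_erase_lt_of_mem hFfilt
    exact absurd (hBcnt B2 hB2mem2) (not_le.mpr hlt)
  refine ⟨B, hall, hBc, ?_⟩
  intro B' hB'
  have hB'mem : B' ∈ Cand := by
    rw [hCanddef, Finset.mem_filter]; exact ⟨Finset.mem_univ _, hB'⟩
  exact le_trans hBw (hBmmin B' hB'mem)
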